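/- Let P be a poset with least element 0 and let Z be a lower complete sublattice of P which is P-central and Z-modular. Then for every p ∈ P and z ∈ Z there exists q ∈ P with q ≤ p, q ≤ z and c_Z(q) = c_Z(p)∧z, where c_Z(p)∧z denotes the infimum in P of c_Z(p) and z (which exists and lies in Z). -/
import Mathlib


/-- `S` is `Z`-disjoint: there is `f : S → Z` with `p ≤ f p` and `f p ∧ f q = 0`
for distinct `p, q ∈ S`. -/
def ZDisjoint {β : Type*} [PartialOrder β] [OrderBot β] (Z S : Set β) : Prop :=
  ∃ f : β → β, (∀ p ∈ S, f p ∈ Z ∧ p ≤ f p) ∧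
    ∀ p ∈ S, ∀ q ∈ S, p ≠ q → Disjoint (f p) (f q)

/-- `I` is `Z`-complete: every `Z`-disjoint `S ⊆ I` has a supremum lying in `I`, and
whenever `{p, q}` is `Z`-disjoint with supremum in `I`, both `p` and `q` lie in `I`. -/
def ZComplete {β : Type*} [PartialOrder β] [OrderBot β] (Z I : Set β) : Prop :=
  (∀ S ⊆ I, ZDisjoint Z S → ∃ s, IsLUB S s ∧ s ∈ I) ∧
  (∀ p q s, ZDisjoint Z {p, q} → IsLUB {p, q} s → s ∈ I → p ∈ I ∧ q ∈ I)

/-- `Z` is `S`-central: for every `p ∈ S` and `y ∈ Z` there is `z ∈ Z` with `y ∧ z = 0`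
and `p` the supremum of some `q ≤ y` and `r ≤ z`. -/
def SCentral {β : Type*} [PartialOrder β] [OrderBot β] (Z S : Set β) : Prop :=
  ∀ p ∈ S, ∀ y ∈ Z, ∃ z ∈ Z, Disjoint y z ∧ ∃ q r, q ≤ y ∧ r ≤ z ∧ IsLUB {q, r} p
/-- `Z` is `Z`-modular: whenever `y, z ∈ Z` with `y ∧ z = 0`, `p, q ∈ Z` with `p ≤ y`,
`q ≤ z` and `p, q` have a least upper bound `s` within the subposet `Z`, then `q` is the
greatest lower bound within `Z` of `z` and `s`. -/
def ZModular {β : Type*} [PartialOrder β] [OrderBot β] (Z : Set β) : Prop :=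
  ∀ y ∈ Z, ∀ z ∈ Z, Disjoint y z → ∀ p ∈ Z, ∀ q ∈ Z, p ≤ y → q ≤ z →
    ∀ s ∈ Z, (p ≤ s ∧ q ≤ s ∧ ∀ w ∈ Z, p ≤ w → q ≤ w → s ≤ w) →
      (q ≤ s ∧ ∀ w ∈ Z, w ≤ z → w ≤ s → w ≤ q)
/-- If `Z` is a `Z`-modular `P`-central lower complete sublattice of `P` then for all
`p ∈ P` and `z ∈ Z` there is `q ≤ p, z` with `c_Z q = c_Z p ∧ z`, where `c_Z p ∧ z` is
the infimum in `P` of `c_Z p` and `z`, which exists and lies in `Z`. -/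
theorem stmt7 {α : Type*} [PartialOrder α] [OrderBot α] (Z : Set α) (c : α → α)
    (hZl : ∀ S ⊆ Z, ∃ i, IsGLB S i ∧ i ∈ Z)
    (hc : ∀ p, c p ∈ Z ∧ IsGLB {z | z ∈ Z ∧ p ≤ z} (c p))
    (hcen : SCentral Z Set.univ) (hzm : ZModular Z) :
    ∀ p : α, ∀ z ∈ Z, ∃ m, IsGLB {c p, z} m ∧ m ∈ Z ∧
      ∃ q, q ≤ p ∧ q ≤ z ∧ c q = m := by
  intro p z hz
  obtain ⟨m, hm, hmZ⟩ := hZl {c p, z} (by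
    rintro x (rfl | rfl)
    · exact (hc p).1
    · exact hz)
  refine ⟨m, hm, hmZ, ?_⟩
  obtain ⟨z', hz'Z, hdisj, q, r, hqz, hrz', hlub⟩ := hcen p (Set.mem_univ p) z hz
  have hqp : q ≤ p := hlub.1 (Set.mem_insert _ _)
  have hrp : r ≤ p := hlub.1 (Set.mem_insert_of_mem _ rfl)
  have hpcp : p ≤ c p := (hc p).2.2 (fun x hx => hx.2)
  have hqcq : q ≤ c q := (hc q).2.2 (fun x hx => hx.2)
  have hrcr : r ≤ c r := (hc r).2.2 (fun x hx => hx.2)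
  have hcq_cp : c q ≤ c p := (hc q).2.1 ⟨(hc p).1, hqp.trans hpcp⟩
  have hcr_cp : c r ≤ c p := (hc r).2.1 ⟨(hc p).1, hrp.trans hpcp⟩
  have hcq_z : c q ≤ z := (hc q).2.1 ⟨hz, hqz⟩
  have hcr_z' : c r ≤ z' := (hc r).2.1 ⟨hz'Z, hrz'⟩
  refine ⟨q, hqp, hqz, le_antisymm ?_ ?_⟩
  · exact hm.2 (by rintro x (rfl | rfl); exacts [hcq_cp, hcq_z])
  · have hsup : ∀ w ∈ Z, c r ≤ w → c q ≤ w → c p ≤ w := by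
      intro w hw hrw hqw
      have hpw : p ≤ w := hlub.2 (by rintro x (rfl | rfl)
                                     exacts [hqcq.trans hqw, hrcr.trans hrw])
      exact (hc p).2.1 ⟨hw, hpw⟩
    have := hzm z' hz'Z z hz hdisj.symm (c r) (hc r).1 (c q) (hc q).1
      hcr_z' hcq_z (c p) (hc p).1 ⟨hcr_cp, hcq_cp, hsup⟩
    exact this.2 m hmZ (hm.1 (Set.mem_insert_of_mem _ rfl)) (hm.1 (Set.mem_insert _ _))
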